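/- Let θ_r, θ_i, θ̃_r, θ̃_i ∈ [0, π/2] with |θ̃_r − θ_r| ≤ π√(nε)/(2√2) and |θ̃_i − θ_i| ≤ π√(nε)/(2√2), and let ỹ_r, ỹ_i be such that |ỹ_r π/2^{t−1} − 2θ̃_r| ≤ π/2^m and |ỹ_i π/2^{t−1} − 2θ̃_i| ≤ π/2^m. Define |d̃⟩ = R_Z(−π/2) R_Z(ỹ_i π/2^{t−1}) R_Y(ỹ_r π/2^{t−1}) |0⟩ and |d⟩ = R_Z(−π/2) R_Z(2θ_i) R_Y(2θ_r) |0⟩. Then ‖|d̃⟩ − |d⟩‖ ≤ π/2^{m−1} + π√(nε)/√2. -/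

import Mathlib

open Complex

noncomputable def RY (β : ℝ) : Matrix (Fin 2) (Fin 2) ℂ :=
  !![(Real.cos (β / 2) : ℂ), -(Real.sin (β / 2) : ℂ);
     (Real.sin (β / 2) : ℂ), (Real.cos (β / 2) : ℂ)]

noncomputable def RZ (γ : ℝ) : Matrix (Fin 2) (Fin 2) ℂ :=
  !![Complex.exp (-I * γ / 2), 0; 0, Complex.exp (I * γ / 2)]

noncomputable def ket0 : Fin 2 → ℂ := fun i => if i = 0 then 1 else 0

/-- View a plain vector of `ℂ^2` as an element of Euclidean space (ℓ² norm). -/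
noncomputable def toE (v : Fin 2 → ℂ) : EuclideanSpace ℂ (Fin 2) := WithLp.toLp 2 v

lemma trig_sq (x y : ℝ) :
    (Real.cos x - Real.cos y)^2 + (Real.sin x - Real.sin y)^2 ≤ (x - y)^2 := by
  have hc := Real.cos_sub x y
  have hs : |Real.sin ((x-y)/2)| ≤ |(x-y)/2| := Real.abs_sin_le_abs
  have hs2 : Real.sin ((x-y)/2)^2 ≤ ((x-y)/2)^2 := by
    rw [← _root_.sq_abs, ← _root_.sq_abs ((x-y)/2)]
    exact pow_le_pow_left₀ (abs_nonneg _) hs 2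
  have hhalf : Real.cos (x - y) = 1 - 2 * Real.sin ((x-y)/2)^2 := by
    have h1 := Real.cos_two_mul ((x-y)/2)
    have h2 := Real.sin_sq_add_cos_sq ((x-y)/2)
    have h3 : 2 * ((x-y)/2) = x - y := by ring
    rw [h3] at h1
    nlinarith
  have hpy1 := Real.sin_sq_add_cos_sq x
  have hpy2 := Real.sin_sq_add_cos_sq y
  nlinarith

lemma expI_abs_eq (x y : ℝ) : ‖(Complex.exp (x * I) - Complex.exp (y * I))‖
    = Real.sqrt ((Real.cos x - Real.cos y)^2 + (Real.sin x - Real.sin y)^2) := by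
  rw [Complex.exp_mul_I, Complex.exp_mul_I, Complex.norm_def, Complex.normSq_apply]
  simp [Complex.cos_ofReal_re, Complex.sin_ofReal_re]
  ring_nf

lemma expI_dist (x y : ℝ) :
    ‖(Complex.exp (x * I) - Complex.exp (y * I))‖ ≤ |x - y| := by
  rw [expI_abs_eq]
  calc Real.sqrt ((Real.cos x - Real.cos y)^2 + (Real.sin x - Real.sin y)^2)
      ≤ Real.sqrt ((x - y)^2) := Real.sqrt_le_sqrt (trig_sq x y)
    _ = |x - y| := Real.sqrt_sq_eq_abs _

noncomputable def vec (β γ : ℝ) : Fin 2 → ℂ :=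
  ![Complex.exp ((Real.pi/4 - γ/2 : ℝ) * I) * (Real.cos (β/2) : ℂ),
    Complex.exp ((γ/2 - Real.pi/4 : ℝ) * I) * (Real.sin (β/2) : ℂ)]

lemma mulVec_eq (β γ : ℝ) :
    (RZ (-(Real.pi/2))).mulVec ((RZ γ).mulVec ((RY β).mulVec ket0)) = vec β γ := by
  funext i
  fin_cases i <;>
    simp [RZ, RY, ket0, vec, Matrix.mulVec, dotProduct, Fin.sum_univ_two,
      ← Complex.exp_add] <;>
  · rw [← mul_assoc, ← Complex.exp_add]
    congr 1
    push_cast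
    ring

lemma norm_toE (u w : Fin 2 → ℂ) :
    ‖toE u - toE w‖ = Real.sqrt (‖(u 0 - w 0)‖^2 + ‖(u 1 - w 1)‖^2) := by
  rw [EuclideanSpace.norm_eq]
  simp [Fin.sum_univ_two, toE]

lemma vec_dist (β β' γ γ' : ℝ) :
    ‖toE (vec β' γ') - toE (vec β γ)‖ ≤ |β' - β|/2 + |γ' - γ|/2 := by
  have tri : ‖toE (vec β' γ') - toE (vec β γ)‖ ≤
      ‖toE (vec β' γ') - toE (vec β' γ)‖ + ‖toE (vec β' γ) - toE (vec β γ)‖ :=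
    norm_sub_le_norm_sub_add_norm_sub _ _ _
  have h2 : ‖toE (vec β' γ) - toE (vec β γ)‖ ≤ |β' - β|/2 := by
    rw [norm_toE]
    have e0 : vec β' γ 0 - vec β γ 0 =
        Complex.exp ((Real.pi/4 - γ/2 : ℝ) * I) *
          ((Real.cos (β'/2) : ℂ) - (Real.cos (β/2) : ℂ)) := by
      simp [vec]; ring
    have e1 : vec β' γ 1 - vec β γ 1 =
        Complex.exp ((γ/2 - Real.pi/4 : ℝ) * I) *
          ((Real.sin (β'/2) : ℂ) - (Real.sin (β/2) : ℂ)) := by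
      simp [vec]; ring
    rw [e0, e1]
    simp only [norm_mul, Complex.norm_exp_ofReal_mul_I, one_mul,
      ← Complex.ofReal_sub, Complex.norm_real, Real.norm_eq_abs]
    calc Real.sqrt (|Real.cos (β'/2) - Real.cos (β/2)|^2 + |Real.sin (β'/2) - Real.sin (β/2)|^2)
        = Real.sqrt ((Real.cos (β'/2) - Real.cos (β/2))^2 + (Real.sin (β'/2) - Real.sin (β/2))^2) := by
          rw [_root_.sq_abs, _root_.sq_abs]
      _ ≤ Real.sqrt ((β'/2 - β/2)^2) := Real.sqrt_le_sqrt (trig_sq _ _)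
      _ = |β'/2 - β/2| := Real.sqrt_sq_eq_abs _
      _ = |β' - β|/2 := by rw [show β'/2 - β/2 = (β' - β)/2 by ring, abs_div]; simp
  have h1 : ‖toE (vec β' γ') - toE (vec β' γ)‖ ≤ |γ' - γ|/2 := by
    rw [norm_toE]
    have e0 : vec β' γ' 0 - vec β' γ 0 =
        (Complex.exp ((Real.pi/4 - γ'/2 : ℝ) * I) - Complex.exp ((Real.pi/4 - γ/2 : ℝ) * I)) *
          (Real.cos (β'/2) : ℂ) := by
      simp [vec]; ring
    have e1 : vec β' γ' 1 - vec β' γ 1 =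
        (Complex.exp ((γ'/2 - Real.pi/4 : ℝ) * I) - Complex.exp ((γ/2 - Real.pi/4 : ℝ) * I)) *
          (Real.sin (β'/2) : ℂ) := by
      simp [vec]; ring
    rw [e0, e1]
    simp only [norm_mul, Complex.norm_real, Real.norm_eq_abs]
    have hd : |γ' - γ|/2 = |(γ' - γ)/2| := by rw [abs_div]; simp
    have b0 : ‖(Complex.exp ((Real.pi/4 - γ'/2 : ℝ) * I) -
        Complex.exp ((Real.pi/4 - γ/2 : ℝ) * I))‖ ≤ |γ' - γ|/2 := by
      calc _ ≤ |(Real.pi/4 - γ'/2) - (Real.pi/4 - γ/2)| := expI_dist _ _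
        _ = |γ' - γ|/2 := by
          rw [show (Real.pi/4 - γ'/2) - (Real.pi/4 - γ/2) = -((γ' - γ)/2) by ring, abs_neg, ← hd]
    have b1 : ‖(Complex.exp ((γ'/2 - Real.pi/4 : ℝ) * I) -
        Complex.exp ((γ/2 - Real.pi/4 : ℝ) * I))‖ ≤ |γ' - γ|/2 := by
      calc _ ≤ |(γ'/2 - Real.pi/4) - (γ/2 - Real.pi/4)| := expI_dist _ _
        _ = |γ' - γ|/2 := by
          rw [show (γ'/2 - Real.pi/4) - (γ/2 - Real.pi/4) = (γ' - γ)/2 by ring, ← hd]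
    have hcs : |Real.cos (β'/2)|^2 + |Real.sin (β'/2)|^2 = 1 := by
      rw [_root_.sq_abs, _root_.sq_abs]
      exact Real.cos_sq_add_sin_sq _
    have hfin : (‖(Complex.exp ((Real.pi/4 - γ'/2 : ℝ) * I) -
          Complex.exp ((Real.pi/4 - γ/2 : ℝ) * I))‖ * |Real.cos (β'/2)|)^2 +
        (‖(Complex.exp ((γ'/2 - Real.pi/4 : ℝ) * I) -
          Complex.exp ((γ/2 - Real.pi/4 : ℝ) * I))‖ * |Real.sin (β'/2)|)^2 ≤ (|γ' - γ|/2)^2 := by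
      have n0 := norm_nonneg (Complex.exp ((Real.pi/4 - γ'/2 : ℝ) * I) -
          Complex.exp ((Real.pi/4 - γ/2 : ℝ) * I))
      have n1 := norm_nonneg (Complex.exp ((γ'/2 - Real.pi/4 : ℝ) * I) -
          Complex.exp ((γ/2 - Real.pi/4 : ℝ) * I))
      have p0 := pow_le_pow_left₀ n0 b0 2
      have p1 := pow_le_pow_left₀ n1 b1 2
      nlinarith [mul_le_mul_of_nonneg_right p0 (sq_nonneg (|Real.cos (β'/2)|)),
        mul_le_mul_of_nonneg_right p1 (sq_nonneg (|Real.sin (β'/2)|))]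
    calc Real.sqrt ((‖(Complex.exp ((Real.pi/4 - γ'/2 : ℝ) * I) -
          Complex.exp ((Real.pi/4 - γ/2 : ℝ) * I))‖ * |Real.cos (β'/2)|)^2 +
        (‖(Complex.exp ((γ'/2 - Real.pi/4 : ℝ) * I) -
          Complex.exp ((γ/2 - Real.pi/4 : ℝ) * I))‖ * |Real.sin (β'/2)|)^2)
        ≤ Real.sqrt ((|γ' - γ|/2)^2) := Real.sqrt_le_sqrt hfin
      _ = |γ' - γ|/2 := Real.sqrt_sq (by positivity)
  linarith

theorem stmt_14 (n t m : ℕ) (hn : 0 < n) (ht : 0 < t) (hm : 0 < m)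
    (ε : ℝ) (hε : 0 < ε)
    (θr θi θtr θti : ℝ)
    (hθr : θr ∈ Set.Icc 0 (Real.pi / 2)) (hθi : θi ∈ Set.Icc 0 (Real.pi / 2))
    (hθtr : θtr ∈ Set.Icc 0 (Real.pi / 2)) (hθti : θti ∈ Set.Icc 0 (Real.pi / 2))
    (hr : |θtr - θr| ≤ Real.pi * Real.sqrt (n * ε) / (2 * Real.sqrt 2))
    (hi : |θti - θi| ≤ Real.pi * Real.sqrt (n * ε) / (2 * Real.sqrt 2))
    (ytr yti : ℝ)
    (hyr : |ytr * Real.pi / 2 ^ (t - 1) - 2 * θtr| ≤ Real.pi / 2 ^ m)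
    (hyi : |yti * Real.pi / 2 ^ (t - 1) - 2 * θti| ≤ Real.pi / 2 ^ m) :
    ‖toE ((RZ (-(Real.pi / 2))).mulVec ((RZ (yti * Real.pi / 2 ^ (t - 1))).mulVec
        ((RY (ytr * Real.pi / 2 ^ (t - 1))).mulVec ket0))) -
      toE ((RZ (-(Real.pi / 2))).mulVec ((RZ (2 * θi)).mulVec
        ((RY (2 * θr)).mulVec ket0)))‖ ≤
      Real.pi / 2 ^ (m - 1) + Real.pi * Real.sqrt (n * ε) / Real.sqrt 2 := by
  rw [mulVec_eq, mulVec_eq]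
  have key := vec_dist (2 * θr) (ytr * Real.pi / 2 ^ (t - 1)) (2 * θi) (yti * Real.pi / 2 ^ (t - 1))
  set S := Real.pi * Real.sqrt (n * ε)
  have hβ : |ytr * Real.pi / 2 ^ (t - 1) - 2 * θr| ≤ Real.pi / 2 ^ m + S / Real.sqrt 2 := by
    have := abs_sub_abs_le_abs_sub (ytr * Real.pi / 2 ^ (t-1) - 2*θtr) (2*θr - 2*θtr)
    have h1 : |ytr * Real.pi / 2 ^ (t - 1) - 2 * θr| ≤
        |ytr * Real.pi / 2 ^ (t - 1) - 2 * θtr| + |2 * θtr - 2 * θr| := by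
      have := abs_sub_le (ytr * Real.pi / 2 ^ (t - 1)) (2 * θtr) (2 * θr)
      linarith
    have h2 : |2 * θtr - 2 * θr| = 2 * |θtr - θr| := by
      rw [show 2 * θtr - 2 * θr = 2 * (θtr - θr) by ring, abs_mul]; simp
    have h3 : 2 * (S / (2 * Real.sqrt 2)) = S / Real.sqrt 2 := by
      field_simp
    rw [h2] at h1
    calc |ytr * Real.pi / 2 ^ (t - 1) - 2 * θr| ≤
        |ytr * Real.pi / 2 ^ (t - 1) - 2 * θtr| + 2 * |θtr - θr| := h1
      _ ≤ Real.pi / 2 ^ m + 2 * (S / (2 * Real.sqrt 2)) := by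
          have := hr; have := hyr; unfold S; linarith
      _ = Real.pi / 2 ^ m + S / Real.sqrt 2 := by rw [h3]
  have hγ : |yti * Real.pi / 2 ^ (t - 1) - 2 * θi| ≤ Real.pi / 2 ^ m + S / Real.sqrt 2 := by
    have h1 : |yti * Real.pi / 2 ^ (t - 1) - 2 * θi| ≤
        |yti * Real.pi / 2 ^ (t - 1) - 2 * θti| + |2 * θti - 2 * θi| := by
      have := abs_sub_le (yti * Real.pi / 2 ^ (t - 1)) (2 * θti) (2 * θi)
      linarith
    have h2 : |2 * θti - 2 * θi| = 2 * |θti - θi| := by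
      rw [show 2 * θti - 2 * θi = 2 * (θti - θi) by ring, abs_mul]; simp
    have h3 : 2 * (S / (2 * Real.sqrt 2)) = S / Real.sqrt 2 := by
      field_simp
    rw [h2] at h1
    calc |yti * Real.pi / 2 ^ (t - 1) - 2 * θi| ≤
        |yti * Real.pi / 2 ^ (t - 1) - 2 * θti| + 2 * |θti - θi| := h1
      _ ≤ Real.pi / 2 ^ m + 2 * (S / (2 * Real.sqrt 2)) := by
          have := hi; have := hyi; unfold S; linarith
      _ = Real.pi / 2 ^ m + S / Real.sqrt 2 := by rw [h3]
  have hmm : Real.pi / 2 ^ m ≤ Real.pi / 2 ^ (m - 1) := by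
    apply div_le_div_of_nonneg_left Real.pi_pos.le (by positivity)
    exact pow_le_pow_right₀ (by norm_num) (Nat.sub_le m 1)
  have hS : 0 ≤ S / Real.sqrt 2 := by positivity
  calc ‖toE (vec (ytr * Real.pi / 2 ^ (t - 1)) (yti * Real.pi / 2 ^ (t - 1))) -
        toE (vec (2 * θr) (2 * θi))‖
      ≤ |ytr * Real.pi / 2 ^ (t - 1) - 2 * θr|/2 + |yti * Real.pi / 2 ^ (t - 1) - 2 * θi|/2 := key
    _ ≤ (Real.pi / 2 ^ m + S / Real.sqrt 2)/2 + (Real.pi / 2 ^ m + S / Real.sqrt 2)/2 := by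
        linarith
    _ = Real.pi / 2 ^ m + S / Real.sqrt 2 := by ring
    _ ≤ Real.pi / 2 ^ (m - 1) + S / Real.sqrt 2 := by linarith
    _ = Real.pi / 2 ^ (m - 1) + Real.pi * Real.sqrt (n * ε) / Real.sqrt 2 := rfl
  done
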